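/- Let T be a surmonad on a surcategory (𝓔, A) over 𝔾 and suppose (𝓔, A) is surcocomplete. Then the surcategory (𝓔^T, A) of suralgebras has surcoequalizers if and only if (𝓔^T, A) is surcocomplete. -/

import Mathlib

open CategoryTheory CategoryTheory.Limits CategoryTheory.MonoidalCategory

universe w w' v u v₁ u₁ v₂ u₂ v₃ u₃ v₄ u₄

namespace Sur

variable {G : Type u} [Category.{v} G]

section Basic

variable {E : Type u₁} [Category.{v₁} E]

/-- A diagram whose composite with the arity functor is constant at `B`. -/
structure ArityConst (A : E ⥤ G) {J : Type w} [Category.{w'} J] (F : J ⥤ E) (B : G) : Prop where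
  obj_eq : ∀ j, A.obj (F.obj j) = B
  map_eq : ∀ {j j'} (f : j ⟶ j'),
    A.map (F.map f) = eqToHom ((obj_eq j).trans (obj_eq j').symm)

/-- A surcone on a diagram whose arity is constant at `B`: a cone together with an arity
morphism under which all legs lie. -/
structure Surcone (A : E ⥤ G) {J : Type w} [Category.{w'} J] (F : J ⥤ E) (B : G)
    (h : ∀ j, A.obj (F.obj j) = B) where
  pt : E
  leg : ∀ j, pt ⟶ F.obj j
  w : ∀ {j j'} (f : j ⟶ j'), leg j ≫ F.map f = leg j'
  arity : A.obj pt ⟶ B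
  fac : ∀ j, A.map (leg j) ≫ eqToHom (h j) = arity

/-- A surcone is a surlimit if its apex is in the fiber over `B`, its arity is the identity,
and every surcone factors through it by a unique morphism. -/
structure IsSurlimit (A : E ⥤ G) {J : Type w} [Category.{w'} J] {F : J ⥤ E} {B : G}
    {h : ∀ j, A.obj (F.obj j) = B} (c : Surcone A F B h) : Prop where
  pt_eq : A.obj c.pt = B
  arity_eq : c.arity = eqToHom pt_eq
  lift : ∀ c' : Surcone A F B h, ∃! f : c'.pt ⟶ c.pt,
    (∀ j, f ≫ c.leg j = c'.leg j) ∧ A.map f ≫ eqToHom pt_eq = c'.arity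

/-- `(E, A)` has `J`-surlimits. -/
def HasSurlimitsOfShape (A : E ⥤ G) (J : Type w) [Category.{w'} J] : Prop :=
  ∀ (F : J ⥤ E) (B : G) (hc : ArityConst A F B),
    ∃ c : Surcone A F B hc.obj_eq, IsSurlimit A c

/-- Dual notion : surcocone. -/
structure Surcocone (A : E ⥤ G) {J : Type w} [Category.{w'} J] (F : J ⥤ E) (B : G)
    (h : ∀ j, A.obj (F.obj j) = B) where
  pt : E
  leg : ∀ j, F.obj j ⟶ pt
  w : ∀ {j j'} (f : j ⟶ j'), F.map f ≫ leg j' = leg j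
  arity : B ⟶ A.obj pt
  fac : ∀ j, eqToHom (h j).symm ≫ A.map (leg j) = arity

structure IsSurcolimit (A : E ⥤ G) {J : Type w} [Category.{w'} J] {F : J ⥤ E} {B : G}
    {h : ∀ j, A.obj (F.obj j) = B} (c : Surcocone A F B h) : Prop where
  pt_eq : A.obj c.pt = B
  arity_eq : c.arity = eqToHom pt_eq.symm
  desc : ∀ c' : Surcocone A F B h, ∃! f : c.pt ⟶ c'.pt,
    (∀ j, c.leg j ≫ f = c'.leg j) ∧ eqToHom pt_eq.symm ≫ A.map f = c'.arity

def HasSurcolimitsOfShape (A : E ⥤ G) (J : Type w) [Category.{w'} J] : Prop :=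
  ∀ (F : J ⥤ E) (B : G) (hc : ArityConst A F B),
    ∃ c : Surcocone A F B hc.obj_eq, IsSurcolimit A c

/-- `(E, A)` has K-equalizers : every parallel pair with equal arity image has an equalizer
lying over an identity of the base. -/
def HasKEqualizers (A : E ⥤ G) : Prop :=
  ∀ ⦃a b : E⦄ (f g : a ⟶ b), A.map f = A.map g →
    ∃ (c : E) (e : c ⟶ a) (hc : A.obj c = A.obj a),
      A.map e = eqToHom hc ∧ e ≫ f = e ≫ g ∧
      ∀ ⦃d : E⦄ (k : d ⟶ a), k ≫ f = k ≫ g → ∃! l : d ⟶ c, l ≫ e = k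

/-- `e` is a surcoequalizer of the pair `(f, g)`. -/
def IsSurcoequalizer (A : E ⥤ G) {a b c : E} (f g : a ⟶ b) (e : b ⟶ c) : Prop :=
  ∃ h : A.obj b = A.obj c, A.map e = eqToHom h ∧ f ≫ e = g ≫ e ∧
    ∀ ⦃d : E⦄ (k : b ⟶ d), f ≫ k = g ≫ k → ∃! l : c ⟶ d, e ≫ l = k

/-- `(E, A)` has surcoequalizers of all parallel pairs lying in one fiber. -/
def HasSurcoequalizers (A : E ⥤ G) : Prop :=
  ∀ ⦃a b : E⦄ (f g : a ⟶ b) (hab : A.obj a = A.obj b),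
    A.map f = eqToHom hab → A.map g = eqToHom hab →
    ∃ (c : E) (e : b ⟶ c), IsSurcoequalizer A f g e

/-- `(E, A)` has surequalizers of all parallel pairs lying in one fiber. -/
def HasSurequalizers (A : E ⥤ G) : Prop :=
  ∀ ⦃a b : E⦄ (f g : a ⟶ b) (hab : A.obj a = A.obj b),
    A.map f = eqToHom hab → A.map g = eqToHom hab →
    ∃ (c : E) (e : c ⟶ a) (hc : A.obj c = A.obj a),
      A.map e = eqToHom hc ∧ e ≫ f = e ≫ g ∧
      ∀ ⦃d : E⦄ (k : d ⟶ a), k ≫ f = k ≫ g → ∃! l : d ⟶ c, l ≫ e = k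

/-- A split surfork : a split fork lying entirely in one fiber. -/
def IsSplitSurfork (A : E ⥤ G) {a b c : E} (f g : a ⟶ b) (h : b ⟶ c) : Prop :=
  (∃ hab : A.obj a = A.obj b, A.map f = eqToHom hab ∧ A.map g = eqToHom hab) ∧
  (∃ hbc : A.obj b = A.obj c, A.map h = eqToHom hbc) ∧
  f ≫ h = g ≫ h ∧
  ∃ (s : c ⟶ b) (t : b ⟶ a),
    (∃ hcb : A.obj c = A.obj b, A.map s = eqToHom hcb) ∧
    (∃ hba : A.obj b = A.obj a, A.map t = eqToHom hba) ∧
    s ≫ h = 𝟙 c ∧ t ≫ f = 𝟙 b ∧ t ≫ g = h ≫ s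

/-- A surinitial object in the fiber over `Gobj`. -/
def Surinitial (A : E ⥤ G) (Gobj : G) (x : E) : Prop :=
  ∃ hx : A.obj x = Gobj, ∀ (d : E) (h : Gobj ⟶ A.obj d),
    ∃! f : x ⟶ d, A.map f = eqToHom hx ≫ h

/-- A surmonad : a monad whose underlying functor, unit and multiplication lie over
identities of the base. -/
structure IsSurmonad (A : E ⥤ G) (T : Monad E) : Prop where
  sur : T.toFunctor ⋙ A = A
  unit_arity : ∀ X : E, A.map (T.η.app X) = eqToHom (Functor.congr_obj sur X).symm
  mul_arity : ∀ X : E, A.map (T.μ.app X) = eqToHom (Functor.congr_obj sur (T.obj X))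

end Basic

section Two

variable {E : Type u₁} [Category.{v₁} E] {E' : Type u₂} [Category.{v₂} E']

/-- An absolute surcoequalizer : a surcoequalizer preserved by every surfunctor. -/
def IsAbsoluteSurcoequalizer.{ua, va, ug, vg, ue, ve} {Gb : Type ug} [Category.{vg} Gb]
    {Eb : Type ue} [Category.{ve} Eb] (A : Eb ⥤ Gb) {a b c : Eb}
    (f g : a ⟶ b) (e : b ⟶ c) : Prop :=
  IsSurcoequalizer A f g e ∧
  ∀ (D : Type ua) [Category.{va} D] (A' : D ⥤ Gb) (Fc : Eb ⥤ D),
    Fc ⋙ A' = A → IsSurcoequalizer A' (Fc.map f) (Fc.map g) (Fc.map e)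

/-- The image of a surcone under a surfunctor. -/
def Surcone.map {A : E ⥤ G} {A' : E' ⥤ G} (Fc : E ⥤ E') (hsur : Fc ⋙ A' = A)
    {J : Type w} [Category.{w'} J] {D : J ⥤ E} {B : G} {h : ∀ j, A.obj (D.obj j) = B}
    (c : Surcone A D B h) :
    Surcone A' (D ⋙ Fc) B (fun j => (Functor.congr_obj hsur (D.obj j)).trans (h j)) where
  pt := Fc.obj c.pt
  leg j := Fc.map (c.leg j)
  w {j j'} f := by
    dsimp only [Functor.comp_map]
    rw [← Fc.map_comp, c.w f]
  arity := eqToHom (Functor.congr_obj hsur c.pt) ≫ c.arity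
  fac j := by
    have h1 := Functor.congr_hom hsur (c.leg j)
    dsimp only [Functor.comp_map] at h1
    rw [h1, Category.assoc, Category.assoc, eqToHom_trans, c.fac j]

/-- The image of a surcocone under a surfunctor. -/
def Surcocone.map {A : E ⥤ G} {A' : E' ⥤ G} (Fc : E ⥤ E') (hsur : Fc ⋙ A' = A)
    {J : Type w} [Category.{w'} J] {D : J ⥤ E} {B : G} {h : ∀ j, A.obj (D.obj j) = B}
    (c : Surcocone A D B h) :
    Surcocone A' (D ⋙ Fc) B (fun j => (Functor.congr_obj hsur (D.obj j)).trans (h j)) where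
  pt := Fc.obj c.pt
  leg j := Fc.map (c.leg j)
  w {j j'} f := by
    dsimp only [Functor.comp_map]
    rw [← Fc.map_comp, c.w f]
  arity := c.arity ≫ eqToHom (Functor.congr_obj hsur c.pt).symm
  fac j := by
    have h1 := Functor.congr_hom hsur (c.leg j)
    dsimp only [Functor.comp_map] at h1
    rw [h1, eqToHom_trans_assoc, ← Category.assoc, c.fac j]

/-- A surfunctor preserves `J`-surlimits. -/
def PreservesSurlimitsOfShape {A : E ⥤ G} {A' : E' ⥤ G} (Fc : E ⥤ E') (hsur : Fc ⋙ A' = A)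
    (J : Type w) [Category.{w'} J] : Prop :=
  ∀ (D : J ⥤ E) (B : G) (hc : ArityConst A D B) (c : Surcone A D B hc.obj_eq),
    IsSurlimit A c → IsSurlimit A' (c.map Fc hsur)

/-- A surfunctor preserves `J`-surcolimits. -/
def PreservesSurcolimitsOfShape {A : E ⥤ G} {A' : E' ⥤ G} (Fc : E ⥤ E') (hsur : Fc ⋙ A' = A)
    (J : Type w) [Category.{w'} J] : Prop :=
  ∀ (D : J ⥤ E) (B : G) (hc : ArityConst A D B) (c : Surcocone A D B hc.obj_eq),
    IsSurcolimit A c → IsSurcolimit A' (c.map Fc hsur)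

/-- A surfunctor preserves K-equalizers. -/
def PreservesKEqualizers {A : E ⥤ G} {A' : E' ⥤ G} (Fc : E ⥤ E')
    (_hsur : Fc ⋙ A' = A) : Prop :=
  ∀ ⦃a b c : E⦄ (f g : a ⟶ b) (e : c ⟶ a) (hc : A.obj c = A.obj a),
    A.map f = A.map g → A.map e = eqToHom hc → e ≫ f = e ≫ g →
    (∀ ⦃d : E⦄ (k : d ⟶ a), k ≫ f = k ≫ g → ∃! l : d ⟶ c, l ≫ e = k) →
    (Fc.map e ≫ Fc.map f = Fc.map e ≫ Fc.map g ∧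
     ∀ ⦃d : E'⦄ (k : d ⟶ Fc.obj a), k ≫ Fc.map f = k ≫ Fc.map g →
       ∃! l : d ⟶ Fc.obj c, l ≫ Fc.map e = k)

/-- A suradjunction : an adjunction between surfunctors whose unit and counit lie over
identities of the base. -/
structure IsSuradjunction (A' : E' ⥤ G) (A : E ⥤ G) (Fl : E' ⥤ E) (Fr : E ⥤ E')
    (adj : Fl ⊣ Fr) : Prop where
  left_sur : Fl ⋙ A = A'
  right_sur : Fr ⋙ A' = A
  unit_arity : ∀ X : E', A'.map (adj.unit.app X) =
    eqToHom (((Functor.congr_obj right_sur (Fl.obj X)).trans (Functor.congr_obj left_sur X)).symm)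
  counit_arity : ∀ Y : E, A.map (adj.counit.app Y) =
    eqToHom ((Functor.congr_obj left_sur (Fr.obj Y)).trans (Functor.congr_obj right_sur Y))

/-- `U` creates surcoequalizers of the parallel pair `(f, g)`. -/
def CreatesSurcoequalizersOf (A : E ⥤ G) (A' : E' ⥤ G) (U : E ⥤ E')
    {a b : E} (f g : a ⟶ b) : Prop :=
  ∀ (c : E') (e : U.obj b ⟶ c), IsSurcoequalizer A' (U.map f) (U.map g) e →
    ∃ (z : E) (q : b ⟶ z) (hz : U.obj z = c),
      U.map q = e ≫ eqToHom hz.symm ∧ IsSurcoequalizer A f g q ∧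
      ∀ (z' : E) (q' : b ⟶ z') (hz' : U.obj z' = c),
        U.map q' = e ≫ eqToHom hz'.symm →
        ∃ hzz : z = z', q' = q ≫ eqToHom hzz

/-- The solution set condition for an object `B` relative to a surfunctor `Fc`. -/
def SolutionSet (A' : E' ⥤ G) (Fc : E ⥤ E') (B : E') : Prop :=
  ∃ (I : Type w) (obj : I → E) (bi : ∀ i, B ⟶ Fc.obj (obj i))
    (hι : ∀ i, A'.obj B = A'.obj (Fc.obj (obj i))),
    (∀ i, A'.map (bi i) = eqToHom (hι i)) ∧
    ∀ (a : E) (b : B ⟶ Fc.obj a), ∃ (i : I) (x : obj i ⟶ a), bi i ≫ Fc.map x = b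

/-- A fusionnable suradjunction (condition on the right adjoint surfunctor `U`). -/
def Fusionnable {Ac : E ⥤ G} {Ab : E' ⥤ G} (U : E ⥤ E') (hU : U ⋙ Ab = Ac) : Prop :=
  HasSurcoequalizers Ac ∧ HasSurcolimitsOfShape Ac ℕ ∧ HasSurcolimitsOfShape Ab ℕ ∧
  U.Faithful ∧ PreservesSurcolimitsOfShape U hU ℕ

/-- A `κ`-filtered category : every diagram of size `< κ` admits a cocone. -/
def IsCardinalFilteredCat (J : Type w) [Category.{w} J] (κ : Cardinal.{w}) : Prop :=
  ∀ (K : Type w) [SmallCategory K], Cardinal.mk K < κ →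
    Cardinal.mk ((k : K) × (k' : K) × (k ⟶ k')) < κ →
    ∀ D : K ⥤ J, ∃ (j : J) (cc : ∀ k, D.obj k ⟶ j),
      ∀ {k k'} (f : k ⟶ k'), D.map f ≫ cc k' = cc k

end Two

section Pullback

variable {E : Type u₁} [Category.{v₁} E] {E' : Type u₂} [Category.{v₂} E']
  {Bc : Type u₃} [Category.{v₃} Bc]

/-- The strict pullback of two functors `U : E ⥤ Bc` and `V : E' ⥤ Bc`. -/
structure CatPullback (U : E ⥤ Bc) (V : E' ⥤ Bc) where
  left : E
  right : E'
  eq : U.obj left = V.obj right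

@[ext]
structure CatPullbackHom (U : E ⥤ Bc) (V : E' ⥤ Bc) (X Y : CatPullback U V) where
  left : X.left ⟶ Y.left
  right : X.right ⟶ Y.right
  w : U.map left = eqToHom X.eq ≫ V.map right ≫ eqToHom Y.eq.symm

instance (U : E ⥤ Bc) (V : E' ⥤ Bc) : Category (CatPullback U V) where
  Hom X Y := CatPullbackHom U V X Y
  id X := ⟨𝟙 _, 𝟙 _, by simp⟩
  comp f g := ⟨f.left ≫ g.left, f.right ≫ g.right, by simp [f.w, g.w]⟩
  id_comp f := by apply CatPullbackHom.ext <;> simp [CategoryStruct.comp, CategoryStruct.id]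
  comp_id f := by apply CatPullbackHom.ext <;> simp [CategoryStruct.comp, CategoryStruct.id]
  assoc f g h := by apply CatPullbackHom.ext <;> simp [CategoryStruct.comp]

/-- The canonical functor from the strict pullback of `U` and `V` to their common codomain. -/
def Ofun (U : E ⥤ Bc) (V : E' ⥤ Bc) : CatPullback U V ⥤ Bc where
  obj X := U.obj X.left
  map f := U.map f.left
  map_id X := by
    show U.map (𝟙 X.left) = _
    simp
  map_comp f g := by
    show U.map (_ ≫ _) = _
    simp

/-- The arity functor on the comma category `B ↓ Fc` of a surfunctor `Fc`. -/
def commaArity {A : E ⥤ G} {A' : E' ⥤ G} (Fc : E ⥤ E') (hsur : Fc ⋙ A' = A) (B : E') :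
    StructuredArrow B Fc ⥤ Under (A'.obj B) where
  obj p := Under.mk (A'.map p.hom ≫ eqToHom (Functor.congr_obj hsur p.right))
  map {p q} f := Under.homMk (A.map f.right) (by
    have hw : p.hom ≫ Fc.map f.right = q.hom := StructuredArrow.w f
    have h1 := Functor.congr_hom hsur f.right
    dsimp only [Functor.comp_map] at h1
    dsimp [Under.mk]
    have h2 : eqToHom (Functor.congr_obj hsur p.right) ≫ A.map f.right
        = A'.map (Fc.map f.right) ≫ eqToHom (Functor.congr_obj hsur q.right) := by
      rw [h1]; simp
    rw [Category.assoc, h2, ← Category.assoc, ← A'.map_comp, hw])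

end Pullback

universe s

/-! ### Auxiliary material for the main theorem -/

section Aux

/-- A parallel-pair category living in an arbitrary universe. -/
inductive PP : Type s where
  | A : PP
  | B : PP

/-- Homs of the parallel-pair category. -/
def PPHom : PP.{s} → PP.{s} → Type s
  | .A, .A => PUnit
  | .A, .B => ULift Bool
  | .B, .A => PEmpty
  | .B, .B => PUnit

/-- Composition in the parallel-pair category. -/
def PPcomp : {x y z : PP.{s}} → PPHom x y → PPHom y z → PPHom x z
  | .A, .A, _, _, g => g
  | .A, .B, .B, f, _ => f
  | .A, .B, .A, _, g => g.elim
  | .B, .A, _, f, _ => f.elim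
  | .B, .B, .B, _, _ => PUnit.unit
  | .B, .B, .A, _, g => g.elim

instance : SmallCategory PP.{s} where
  Hom := PPHom
  id x := match x with
    | .A => PUnit.unit
    | .B => PUnit.unit
  comp := PPcomp
  id_comp {x y} f := by
    cases x <;> cases y <;> first | rfl | exact f.elim
  comp_id {x y} f := by
    cases x <;> cases y <;> first | rfl | exact f.elim
  assoc {w x y z} f g h := by
    cases w <;> cases x <;> cases y <;> cases z <;>
      first | rfl | exact f.elim | exact g.elim | exact h.elim

/-- The parallel-pair diagram on `f, g`. -/
def ppDiagram {C : Type u₄} [Category.{v₄} C] {X Y : C} (f g : X ⟶ Y) : PP.{s} ⥤ C where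
  obj x := match x with
    | .A => X
    | .B => Y
  map {x y} m := match x, y, m with
    | .A, .A, _ => 𝟙 X
    | .B, .B, _ => 𝟙 Y
    | .A, .B, m => match m.down with
      | true => f
      | false => g
    | .B, .A, m => m.elim
  map_id x := by cases x <;> rfl
  map_comp {x y z} m n := by
    cases x <;> cases y <;> cases z <;>
      first
      | exact m.elim
      | exact n.elim
      | simp [CategoryStruct.comp, PPcomp]

/-- Any surcategory with `PP`-shaped surcolimits has surcoequalizers. -/
lemma hasSurcoequalizers_of_pp {G : Type u} [Category.{v} G] {E' : Type u₂} [Category.{v₂} E']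
    (A' : E' ⥤ G) (h : HasSurcolimitsOfShape A' PP.{s}) : HasSurcoequalizers A' := by
  intro a b f g hab hf hg
  set D := ppDiagram.{v₂, u₂} f g with hD
  have hobj : ∀ j : PP.{s}, A'.obj (D.obj j) = A'.obj b := by
    intro j; cases j
    · exact hab
    · rfl
  have harity : ArityConst A' D (A'.obj b) := by
    refine ⟨hobj, ?_⟩
    intro j j' m
    cases j <;> cases j'
    · rw [show m = 𝟙 PP.A from rfl, D.map_id]; simp
    · obtain ⟨_ | _⟩ := m
      · exact hg
      · exact hf
    · exact m.elim
    · rw [show m = 𝟙 PP.B from rfl, D.map_id]; simp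
  obtain ⟨c, hc⟩ := h D (A'.obj b) harity
  have hwt : f ≫ c.leg PP.B = c.leg PP.A :=
    c.w (show PP.A ⟶ PP.B from ULift.up true)
  have hwf : g ≫ c.leg PP.B = c.leg PP.A :=
    c.w (show PP.A ⟶ PP.B from ULift.up false)
  have hmape : A'.map (c.leg PP.B) = eqToHom hc.pt_eq.symm := by
    have := c.fac PP.B
    rw [hc.arity_eq] at this
    calc A'.map (c.leg PP.B)
        = eqToHom (harity.obj_eq PP.B) ≫
            (eqToHom (harity.obj_eq PP.B).symm ≫ A'.map (c.leg PP.B)) := by simp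
      _ = _ := by rw [this]; simp; rfl
  refine ⟨c.pt, c.leg PP.B, hc.pt_eq.symm, hmape, by rw [hwt, hwf], ?_⟩
  intro d k hk
  let hcoc : Surcocone A' D (A'.obj b) harity.obj_eq :=
    { pt := d
      leg := fun j => match j with
        | .A => f ≫ k
        | .B => k
      w := by
        intro j j' m
        cases j <;> cases j'
        · rw [show m = 𝟙 PP.A from rfl, D.map_id]; simp
        · obtain ⟨_ | _⟩ := m
          · exact hk.symm
          · rfl
        · exact m.elim
        · rw [show m = 𝟙 PP.B from rfl, D.map_id]; exact Category.id_comp k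
      arity := eqToHom (hobj PP.B).symm ≫ A'.map k
      fac := by
        intro j
        cases j
        · show eqToHom (hobj PP.A).symm ≫ A'.map (f ≫ k) = _
          erw [A'.map_comp, hf, eqToHom_trans_assoc]; rfl
        · rfl }
  obtain ⟨l, ⟨hl1, hl2⟩, hluniq⟩ := hc.desc hcoc
  refine ⟨l, hl1 PP.B, ?_⟩
  intro l' hl'
  refine hluniq l' ⟨?_, ?_⟩
  · intro j
    cases j
    · show c.leg PP.A ≫ l' = f ≫ k
      rw [← hwt]; exact (Category.assoc _ _ _).trans (congrArg (f ≫ ·) hl')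
    · exact hl'
  · have hml : A'.map (c.leg PP.B) ≫ A'.map l' = A'.map k := by
      rw [← A'.map_comp]; exact congrArg A'.map hl'
    rw [hmape] at hml
    show eqToHom hc.pt_eq.symm ≫ A'.map l' = eqToHom (hobj PP.B).symm ≫ A'.map k
    erw [← hml, eqToHom_trans_assoc]

lemma eqToHom_chain3 {C : Type u₄} [Category.{v₄} C] {X Y Z W : C} (p : X = Y) (q : Y = Z)
    (r : Z = W) (s : X = W) : eqToHom p ≫ eqToHom q ≫ eqToHom r = eqToHom s := by
  simp

lemma eqToHom_chain3_comp {C : Type u₄} [Category.{v₄} C] {X Y Z V : C} (p : X = Y) (q : Y = Z)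
    (r : Z = X) (f : X ⟶ V) : eqToHom p ≫ eqToHom q ≫ eqToHom r ≫ f = f := by
  simp

lemma eqToHom_sandwich {C : Type u₄} [Category.{v₄} C] {a b d e : C} (p : a = b) (q : b = a)
    (f : a ⟶ d) (r : d = e) (s : e = d) :
    eqToHom p ≫ ((eqToHom q ≫ f) ≫ eqToHom r) ≫ eqToHom s = f := by
  subst p r; simp

lemma eqToHom_sandwich2 {C : Type u₄} [Category.{v₄} C] {a b c d e : C} (o : a = b)
    (p : b = c) (q : c = a) (f : a ⟶ d) (r : d = e) (s : e = d) :
    eqToHom o ≫ eqToHom p ≫ ((eqToHom q ≫ f) ≫ eqToHom r) ≫ eqToHom s = f := by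
  subst o p r; simp

lemma eqToHom_comp_eq {C : Type u₄} [Category.{v₄} C] {X Y W : C} (h : X = Y)
    {f : Y ⟶ W} {g : X ⟶ W} (hh : eqToHom h ≫ f = g) : f = eqToHom h.symm ≫ g := by
  subst h; simpa using hh

lemma leg_arity {G : Type u} [Category.{v} G] {E' : Type u₂} [Category.{v₂} E'] {A : E' ⥤ G}
    {J : Type w} [Category.{w'} J] {F : J ⥤ E'} {B : G} {h : ∀ j, A.obj (F.obj j) = B}
    {c : Surcocone A F B h} (hc : IsSurcolimit A c) (j : J) :
    A.map (c.leg j) = eqToHom ((h j).trans hc.pt_eq.symm) := by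
  have h1 := c.fac j
  rw [hc.arity_eq] at h1
  calc A.map (c.leg j)
      = eqToHom (h j) ≫ (eqToHom (h j).symm ≫ A.map (c.leg j)) := by simp
    _ = _ := by rw [h1]; simp

lemma alg_arity {G : Type u} [Category.{v} G] {E : Type u₁} [Category.{v₁} E]
    {A : E ⥤ G} {T : Monad E} (hT : IsSurmonad A T) (P : T.Algebra) :
    A.map P.a = eqToHom (Functor.congr_obj hT.sur P.A) := by
  have h : A.map (T.η.app P.A) ≫ A.map P.a = 𝟙 (A.obj P.A) := by
    rw [← A.map_comp, P.unit]
    exact A.map_id P.A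
  rw [hT.unit_arity] at h
  calc A.map P.a
      = eqToHom (Functor.congr_obj hT.sur P.A) ≫
          (eqToHom (Functor.congr_obj hT.sur P.A).symm ≫ A.map P.a) := by simp
    _ = _ := by rw [h]; simp

lemma free_ext {E : Type u₁} [Category.{v₁} E] (T : Monad E) {Z : E} {P : T.Algebra}
    (g g' : T.free.obj Z ⟶ P) (h : T.η.app Z ≫ g.f = T.η.app Z ≫ g'.f) : g = g' := by
  have key : ∀ q : T.free.obj Z ⟶ P, q.f = T.map (T.η.app Z ≫ q.f) ≫ P.a := by
    intro q
    have hq : T.map q.f ≫ P.a = T.μ.app Z ≫ q.f := q.h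
    erw [Functor.map_comp, Category.assoc, hq, ← Category.assoc, T.right_unit, Category.id_comp]
  apply Monad.Algebra.Hom.ext
  rw [key g, key g', h]

/-- The underlying diagram of a diagram of algebras, with reducible object function. -/
@[reducible] def algU {E : Type u₁} [Category.{v₁} E] {T : Monad E} {J : Type s} [SmallCategory J]
    (D : J ⥤ T.Algebra) : J ⥤ E where
  obj j := (D.obj j).A
  map f := (D.map f).f
  map_id j := by simp
  map_comp f g := by simp

/-- The free algebra, with reducible carrier. -/
@[reducible] def freeA {E : Type u₁} [Category.{v₁} E] (T : Monad E) (X : E) : T.Algebra where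
  A := T.obj X
  a := T.μ.app X
  assoc := (T.assoc _).symm

lemma hasSurcolimits_algebras {G : Type u} [Category.{v} G] {E : Type u₁} [Category.{v₁} E]
    (A : E ⥤ G) (T : Monad E) (hT : IsSurmonad A T)
    (hc : ∀ (J : Type s) [SmallCategory J], HasSurcolimitsOfShape A J)
    (hcoeq : HasSurcoequalizers (T.forget ⋙ A))
    (J : Type s) [SmallCategory J] : HasSurcolimitsOfShape (T.forget ⋙ A) J := by
  intro D B hcst
  -- helper facts about `T` and `A`
  have hTm : ∀ {X Y : E} (f : X ⟶ Y), A.map (T.map f) =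
      eqToHom (Functor.congr_obj hT.sur X) ≫ A.map f ≫
        eqToHom (Functor.congr_obj hT.sur Y).symm := by
    intro X Y f
    have h := Functor.congr_hom hT.sur f
    dsimp only [Functor.comp_map] at h
    exact h
  -- the underlying diagram and its surcolimit
  have hUDa : ArityConst A (algU D) B := ⟨hcst.obj_eq, fun {j j'} f => hcst.map_eq f⟩
  obtain ⟨X, hX⟩ := hc J (algU D) B hUDa
  have hx : ∀ j, A.map (X.leg j) = eqToHom ((hcst.obj_eq j).trans hX.pt_eq.symm) :=
    fun j => leg_arity hX j
  have hxw : ∀ {j j'} (m : j ⟶ j'), (D.map m).f ≫ X.leg j' = X.leg j := fun m => X.w m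
  -- the diagram `T ∘ UD` and its surcolimit
  have hTDa : ArityConst A (algU D ⋙ T.toFunctor) B := by
    refine ⟨fun j => (Functor.congr_obj hT.sur ((D.obj j).A)).trans (hcst.obj_eq j), ?_⟩
    intro j j' f
    show A.map (T.map ((D.map f).f)) = _
    rw [hTm ((D.map f).f)]
    have h0 : A.map ((D.map f).f) = eqToHom ((hcst.obj_eq j).trans (hcst.obj_eq j').symm) :=
      hcst.map_eq f
    rw [h0]
    simp
    exact eqToHom_chain3 _ _ _ _
  obtain ⟨Z, hZ⟩ := hc J (algU D ⋙ T.toFunctor) B hTDa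
  have hz : ∀ j, A.map (Z.leg j) =
      eqToHom ((hTDa.obj_eq j).trans hZ.pt_eq.symm) := fun j => leg_arity hZ j
  -- the morphism θ
  let hCθ : Surcocone A (algU D ⋙ T.toFunctor) B hTDa.obj_eq :=
    { pt := X.pt
      leg := fun j => (D.obj j).a ≫ X.leg j
      w := by
        intro j j' m
        show T.map ((D.map m).f) ≫ (D.obj j').a ≫ X.leg j' = (D.obj j).a ≫ X.leg j
        rw [← Category.assoc, (D.map m).h, Category.assoc, hxw m]
      arity := eqToHom hX.pt_eq.symm
      fac := by
        intro j
        show eqToHom _ ≫ A.map ((D.obj j).a ≫ X.leg j) = eqToHom hX.pt_eq.symm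
        rw [A.map_comp, alg_arity hT (D.obj j), hx j]
        simp
        exact eqToHom_chain3 _ _ _ _ }
  obtain ⟨θ, ⟨hθl0, hθa0⟩, hθu⟩ := hZ.desc hCθ
  have hθl : ∀ j, Z.leg j ≫ θ = (D.obj j).a ≫ X.leg j := hθl0
  have hθa : eqToHom hZ.pt_eq.symm ≫ A.map θ = eqToHom hX.pt_eq.symm := hθa0
  have hθm : A.map θ = eqToHom (hZ.pt_eq.trans hX.pt_eq.symm) := by
    rw [eqToHom_comp_eq _ hθa]; simp
  -- the morphism τ
  let hCτ : Surcocone A (algU D ⋙ T.toFunctor) B hTDa.obj_eq :=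
    { pt := T.obj X.pt
      leg := fun j => T.map (X.leg j)
      w := by
        intro j j' m
        show T.map ((D.map m).f) ≫ T.map (X.leg j') = T.map (X.leg j)
        rw [← T.toFunctor.map_comp]
        exact congrArg T.toFunctor.map (hxw m)
      arity := eqToHom ((Functor.congr_obj hT.sur X.pt).trans hX.pt_eq).symm
      fac := by
        intro j
        show eqToHom _ ≫ A.map (T.map (X.leg j)) = _
        rw [hTm (X.leg j), hx j]
        simp
        exact eqToHom_chain3 _ _ _ _ }
  obtain ⟨τ, ⟨hτl0, hτa0⟩, hτu⟩ := hZ.desc hCτ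
  have hτl : ∀ j, Z.leg j ≫ τ = T.map (X.leg j) := hτl0
  have hτa : eqToHom hZ.pt_eq.symm ≫ A.map τ =
      eqToHom ((Functor.congr_obj hT.sur X.pt).trans hX.pt_eq).symm := hτa0
  have hτm : A.map τ = eqToHom (hZ.pt_eq.trans
      ((Functor.congr_obj hT.sur X.pt).trans hX.pt_eq).symm) := by
    rw [eqToHom_comp_eq _ hτa]; simp
  -- the coequalizer pair in the category of algebras
  have hvh : T.map (T.map τ ≫ T.μ.app X.pt) ≫ T.μ.app X.pt =
      T.μ.app Z.pt ≫ T.map τ ≫ T.μ.app X.pt := by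
    have hn := T.μ.naturality τ
    dsimp only [Functor.comp_map] at hn
    rw [Functor.map_comp, Category.assoc, T.assoc, ← Category.assoc, ← Category.assoc, hn,
      Category.assoc]
  set u : freeA T Z.pt ⟶ freeA T X.pt := T.free.map θ with hu_def
  set v : freeA T Z.pt ⟶ freeA T X.pt := ⟨T.map τ ≫ T.μ.app X.pt, hvh⟩ with hv_def
  have habZX : (T.forget ⋙ A).obj (freeA T Z.pt) = (T.forget ⋙ A).obj (freeA T X.pt) := by
    show A.obj (T.obj Z.pt) = A.obj (T.obj X.pt)
    exact (Functor.congr_obj hT.sur Z.pt).trans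
      (hZ.pt_eq.trans (hX.pt_eq.symm.trans (Functor.congr_obj hT.sur X.pt).symm))
  have hu_ar : (T.forget ⋙ A).map u = eqToHom habZX := by
    show A.map (T.map θ) = _
    rw [hTm θ, hθm]
    simp
    rfl
  have hv_ar : (T.forget ⋙ A).map v = eqToHom habZX := by
    show A.map (T.map τ ≫ T.μ.app X.pt) = _
    rw [A.map_comp, hTm τ, hτm, hT.mul_arity X.pt]
    simp
    rfl
  obtain ⟨Ealg, e, hEq, hEar, hErel, hEdesc⟩ := hcoeq u v habZX hu_ar hv_ar
  have hEarf : A.map e.f = eqToHom hEq := hEar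
  have hErelf : T.map θ ≫ e.f = (T.map τ ≫ T.μ.app X.pt) ≫ e.f := by
    have h0 : u.f ≫ e.f = v.f ≫ e.f := by
      rw [← Monad.Algebra.comp_f, ← Monad.Algebra.comp_f, hErel]
    exact h0
  have heh : T.map e.f ≫ Ealg.a = T.μ.app X.pt ≫ e.f := e.h
  -- the key relation
  have hkey : ∀ j, T.map (D.obj j).a ≫ T.map (X.leg j) ≫ e.f =
      T.μ.app ((D.obj j).A) ≫ T.map (X.leg j) ≫ e.f := by
    intro j
    have hn := T.μ.naturality (X.leg j)
    dsimp only [Functor.comp_map] at hn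
    calc T.map (D.obj j).a ≫ T.map (X.leg j) ≫ e.f
        = T.map ((D.obj j).a ≫ X.leg j) ≫ e.f := by rw [Functor.map_comp, Category.assoc]
      _ = T.map (Z.leg j ≫ θ) ≫ e.f := by rw [hθl j]
      _ = T.map (Z.leg j) ≫ T.map θ ≫ e.f := by rw [Functor.map_comp, Category.assoc]
      _ = T.map (Z.leg j) ≫ (T.map τ ≫ T.μ.app X.pt) ≫ e.f := by rw [hErelf]
      _ = (T.map (Z.leg j) ≫ T.map τ) ≫ T.μ.app X.pt ≫ e.f := by simp [Category.assoc]
      _ = T.map (Z.leg j ≫ τ) ≫ T.μ.app X.pt ≫ e.f := by rw [Functor.map_comp]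
      _ = T.map (T.map (X.leg j)) ≫ T.μ.app X.pt ≫ e.f := by rw [hτl j]
      _ = (T.map (T.map (X.leg j)) ≫ T.μ.app X.pt) ≫ e.f := by rw [Category.assoc]
      _ = (T.μ.app ((D.obj j).A) ≫ T.map (X.leg j)) ≫ e.f := by rw [hn]
      _ = T.μ.app ((D.obj j).A) ≫ T.map (X.leg j) ≫ e.f := by rw [Category.assoc]
  set w0 : X.pt ⟶ Ealg.A := T.η.app X.pt ≫ e.f with hw0_def
  have hw0ar : A.map w0 = eqToHom ((Functor.congr_obj hT.sur X.pt).symm.trans hEq) := by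
    rw [hw0_def, A.map_comp, hT.unit_arity X.pt, hEarf]
    simp
    exact eqToHom_trans _ _
  -- the legs of the colimit cocone
  have hLh : ∀ j, T.map (X.leg j ≫ w0) ≫ Ealg.a = (D.obj j).a ≫ X.leg j ≫ w0 := by
    intro j
    have hηx : X.leg j ≫ T.η.app X.pt = T.η.app ((D.obj j).A) ≫ T.map (X.leg j) := by
      have h0 := T.η.naturality (X.leg j)
      dsimp only [Functor.id_map] at h0
      exact h0
    have hηa : (D.obj j).a ≫ T.η.app ((D.obj j).A) =
        T.η.app (T.obj ((D.obj j).A)) ≫ T.map ((D.obj j).a) := by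
      have h0 := T.η.naturality ((D.obj j).a)
      dsimp only [Functor.id_map] at h0
      exact h0
    calc T.map (X.leg j ≫ w0) ≫ Ealg.a
        = T.map (X.leg j) ≫ T.map (T.η.app X.pt) ≫ T.map e.f ≫ Ealg.a := by
          rw [hw0_def]; simp [Functor.map_comp, Category.assoc]
      _ = T.map (X.leg j) ≫ T.map (T.η.app X.pt) ≫ T.μ.app X.pt ≫ e.f := by rw [heh]
      _ = T.map (X.leg j) ≫ (T.map (T.η.app X.pt) ≫ T.μ.app X.pt) ≫ e.f := by
          rw [Category.assoc]
      _ = T.map (X.leg j) ≫ e.f := by rw [T.right_unit]; simp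
      _ = (T.η.app (T.obj ((D.obj j).A)) ≫ T.μ.app ((D.obj j).A)) ≫
            T.map (X.leg j) ≫ e.f := by rw [T.left_unit]; simp
      _ = T.η.app (T.obj ((D.obj j).A)) ≫ T.map (D.obj j).a ≫ T.map (X.leg j) ≫ e.f := by
          rw [Category.assoc, ← hkey j]
      _ = (D.obj j).a ≫ T.η.app ((D.obj j).A) ≫ T.map (X.leg j) ≫ e.f := by
          rw [← Category.assoc, ← hηa, Category.assoc]
      _ = (D.obj j).a ≫ (X.leg j ≫ T.η.app X.pt) ≫ e.f := by rw [hηx]; simp [Category.assoc]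
      _ = (D.obj j).a ≫ X.leg j ≫ T.η.app X.pt ≫ e.f := by simp [Category.assoc]
      _ = (D.obj j).a ≫ X.leg j ≫ w0 := by rw [hw0_def]
  have ptEq : (T.forget ⋙ A).obj Ealg = B :=
    hEq.symm.trans ((Functor.congr_obj hT.sur X.pt).trans hX.pt_eq)
  -- the colimit surcocone
  refine ⟨{ pt := Ealg
            leg := fun j => ⟨X.leg j ≫ w0, hLh j⟩
            w := ?_
            arity := eqToHom ptEq.symm
            fac := ?_ }, ?_, rfl, ?_⟩
  · intro j j' m
    apply Monad.Algebra.Hom.ext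
    show (D.map m).f ≫ X.leg j' ≫ w0 = X.leg j ≫ w0
    rw [← Category.assoc, hxw m]
  · intro j
    show eqToHom (hcst.obj_eq j).symm ≫ A.map (X.leg j ≫ w0) = eqToHom ptEq.symm
    erw [A.map_comp, hx j, hw0ar]
    exact eqToHom_chain3 _ _ _ _
  · exact ptEq
  -- the universal property
  intro c'
  have hfac : ∀ j, eqToHom (hcst.obj_eq j).symm ≫ A.map ((c'.leg j).f) = c'.arity := c'.fac
  let hCP : Surcocone A (algU D) B hUDa.obj_eq :=
    { pt := c'.pt.A
      leg := fun j => (c'.leg j).f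
      w := by
        intro j j' m
        have h0 := congrArg Monad.Algebra.Hom.f (c'.w m)
        simp only [Monad.Algebra.comp_f] at h0
        exact h0
      arity := c'.arity
      fac := hfac }
  obtain ⟨p, ⟨hpl0, hpa0⟩, hpu⟩ := hX.desc hCP
  have hpl : ∀ j, X.leg j ≫ p = (c'.leg j).f := hpl0
  have hpa : eqToHom hX.pt_eq.symm ≫ A.map p = c'.arity := hpa0
  have hpm : A.map p = eqToHom hX.pt_eq ≫ c'.arity := by
    have h0 := eqToHom_comp_eq _ hpa
    rw [h0]; rfl
  have hpsh : T.map (T.map p ≫ c'.pt.a) ≫ c'.pt.a = T.μ.app X.pt ≫ T.map p ≫ c'.pt.a := by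
    have hn := T.μ.naturality p
    dsimp only [Functor.comp_map] at hn
    rw [Functor.map_comp, Category.assoc, ← c'.pt.assoc, ← Category.assoc, hn, Category.assoc]
  set psharp : freeA T X.pt ⟶ c'.pt := ⟨T.map p ≫ c'.pt.a, hpsh⟩ with hpsharp_def
  -- θ ≫ p = τ ≫ T p ≫ a
  let hCQ : Surcocone A (algU D ⋙ T.toFunctor) B hTDa.obj_eq :=
    { pt := c'.pt.A
      leg := fun j => (D.obj j).a ≫ (c'.leg j).f
      w := by
        intro j j' m
        show T.map ((D.map m).f) ≫ (D.obj j').a ≫ (c'.leg j').f = (D.obj j).a ≫ (c'.leg j).f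
        have h0 := congrArg Monad.Algebra.Hom.f (c'.w m)
        simp only [Monad.Algebra.comp_f] at h0
        rw [← Category.assoc, (D.map m).h, Category.assoc, h0]
      arity := c'.arity
      fac := by
        intro j
        show eqToHom _ ≫ A.map ((D.obj j).a ≫ (c'.leg j).f) = c'.arity
        rw [A.map_comp, alg_arity hT (D.obj j), ← hfac j]
        simp
        rfl }
  obtain ⟨q, ⟨hql, hqa⟩, hqu⟩ := hZ.desc hCQ
  have hθp : θ ≫ p = q := by
    apply hqu
    constructor
    · intro j
      show Z.leg j ≫ θ ≫ p = (D.obj j).a ≫ (c'.leg j).f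
      rw [← Category.assoc, hθl j, Category.assoc, hpl j]
    · show eqToHom hZ.pt_eq.symm ≫ A.map (θ ≫ p) = c'.arity
      rw [A.map_comp, hθm, hpm]
      simp
      exact eqToHom_chain3_comp _ _ _ _
  have hτp : τ ≫ T.map p ≫ c'.pt.a = q := by
    apply hqu
    constructor
    · intro j
      show Z.leg j ≫ τ ≫ T.map p ≫ c'.pt.a = (D.obj j).a ≫ (c'.leg j).f
      rw [← Category.assoc, hτl j, ← Category.assoc, ← Functor.map_comp, hpl j, (c'.leg j).h]
    · show eqToHom hZ.pt_eq.symm ≫ A.map (τ ≫ T.map p ≫ c'.pt.a) = c'.arity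
      rw [A.map_comp, A.map_comp, hτm, hTm p, hpm, alg_arity hT c'.pt]
      simp
      exact eqToHom_sandwich _ _ _ _ _
  have hθτ : θ ≫ p = τ ≫ T.map p ≫ c'.pt.a := hθp.trans hτp.symm
  -- u ≫ psharp = v ≫ psharp
  have huv : u ≫ psharp = v ≫ psharp := by
    apply free_ext
    have hηθ : T.η.app Z.pt ≫ T.map θ = θ ≫ T.η.app X.pt := by
      have h0 := T.η.naturality θ
      dsimp only [Functor.id_map] at h0
      exact h0.symm
    have hητ : T.η.app Z.pt ≫ T.map τ = τ ≫ T.η.app (T.obj X.pt) := by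
      have h0 := T.η.naturality τ
      dsimp only [Functor.id_map] at h0
      exact h0.symm
    have hηp : T.η.app X.pt ≫ T.map p = p ≫ T.η.app c'.pt.A := by
      have h0 := T.η.naturality p
      dsimp only [Functor.id_map] at h0
      exact h0.symm
    have hL : T.η.app Z.pt ≫ (u ≫ psharp).f = θ ≫ p := by
      show T.η.app Z.pt ≫ T.map θ ≫ T.map p ≫ c'.pt.a = θ ≫ p
      calc T.η.app Z.pt ≫ T.map θ ≫ T.map p ≫ c'.pt.a
          = (T.η.app Z.pt ≫ T.map θ) ≫ T.map p ≫ c'.pt.a := by rw [Category.assoc]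
        _ = (θ ≫ T.η.app X.pt) ≫ T.map p ≫ c'.pt.a := by rw [hηθ]
        _ = θ ≫ (T.η.app X.pt ≫ T.map p) ≫ c'.pt.a := by simp [Category.assoc]
        _ = θ ≫ (p ≫ T.η.app c'.pt.A) ≫ c'.pt.a := by rw [hηp]
        _ = θ ≫ p := by simp [Category.assoc, c'.pt.unit]; erw [Category.comp_id]
    have hR : T.η.app Z.pt ≫ (v ≫ psharp).f = τ ≫ T.map p ≫ c'.pt.a := by
      show T.η.app Z.pt ≫ (T.map τ ≫ T.μ.app X.pt) ≫ T.map p ≫ c'.pt.a = _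
      calc T.η.app Z.pt ≫ (T.map τ ≫ T.μ.app X.pt) ≫ T.map p ≫ c'.pt.a
          = (T.η.app Z.pt ≫ T.map τ) ≫ T.μ.app X.pt ≫ T.map p ≫ c'.pt.a := by
            simp [Category.assoc]
        _ = (τ ≫ T.η.app (T.obj X.pt)) ≫ T.μ.app X.pt ≫ T.map p ≫ c'.pt.a := by rw [hητ]
        _ = τ ≫ (T.η.app (T.obj X.pt) ≫ T.μ.app X.pt) ≫ T.map p ≫ c'.pt.a := by
            simp [Category.assoc]; erw [Category.id_comp]
        _ = τ ≫ T.map p ≫ c'.pt.a := by rw [T.left_unit]; simp; erw [Category.id_comp]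
    rw [hL, hR, hθτ]
  obtain ⟨φ, hφ, hφu⟩ := hEdesc psharp huv
  have hφf : e.f ≫ φ.f = T.map p ≫ c'.pt.a := by
    have h0 := congrArg Monad.Algebra.Hom.f hφ
    simp only [Monad.Algebra.comp_f] at h0
    exact h0
  have hηp : T.η.app X.pt ≫ T.map p = p ≫ T.η.app c'.pt.A := by
    have h0 := T.η.naturality p
    dsimp only [Functor.id_map] at h0
    exact h0.symm
  refine ⟨φ, ⟨?_, ?_⟩, ?_⟩
  · intro j
    apply Monad.Algebra.Hom.ext
    show (X.leg j ≫ w0) ≫ φ.f = (c'.leg j).f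
    calc (X.leg j ≫ w0) ≫ φ.f
        = X.leg j ≫ T.η.app X.pt ≫ e.f ≫ φ.f := by rw [hw0_def]; simp [Category.assoc]
      _ = X.leg j ≫ T.η.app X.pt ≫ T.map p ≫ c'.pt.a := by rw [hφf]
      _ = X.leg j ≫ (T.η.app X.pt ≫ T.map p) ≫ c'.pt.a := by simp [Category.assoc]
      _ = X.leg j ≫ (p ≫ T.η.app c'.pt.A) ≫ c'.pt.a := by rw [hηp]
      _ = X.leg j ≫ p := by simp [Category.assoc, c'.pt.unit]; erw [Category.comp_id]
      _ = (c'.leg j).f := hpl j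
  · show eqToHom ptEq.symm ≫ A.map φ.f = c'.arity
    have h5 : A.map e.f ≫ A.map φ.f = A.map (T.map p ≫ c'.pt.a) := by
      rw [← A.map_comp, hφf]
    rw [hEarf] at h5
    erw [eqToHom_comp_eq _ h5, A.map_comp, hTm p, hpm, alg_arity hT c'.pt]
    simp
    exact eqToHom_sandwich2 _ _ _ _ _ _
  · intro φ' hφ'
    obtain ⟨hφ'l, hφ'a⟩ := hφ'
    apply hφu
    have hwp : w0 ≫ φ'.f = p := by
      apply hpu
      constructor
      · intro j
        show X.leg j ≫ w0 ≫ φ'.f = (c'.leg j).f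
        have h0 := congrArg Monad.Algebra.Hom.f (hφ'l j)
        simp only [Monad.Algebra.comp_f] at h0
        rw [← Category.assoc]
        exact h0
      · show eqToHom hX.pt_eq.symm ≫ A.map (w0 ≫ φ'.f) = c'.arity
        have hφ'm : A.map φ'.f = eqToHom ptEq ≫ c'.arity := eqToHom_comp_eq _ hφ'a
        clear_value w0
        rw [A.map_comp]
        simp only [hw0ar, hφ'm]
        simp
        exact eqToHom_chain3_comp _ _ _ _
    apply free_ext
    show T.η.app X.pt ≫ (e ≫ φ').f = T.η.app X.pt ≫ T.map p ≫ c'.pt.a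
    calc T.η.app X.pt ≫ (e ≫ φ').f
        = (T.η.app X.pt ≫ e.f) ≫ φ'.f := by
          simp only [Monad.Algebra.comp_f]
          rw [Category.assoc]
      _ = w0 ≫ φ'.f := rfl
      _ = p := hwp
      _ = p ≫ T.η.app c'.pt.A ≫ c'.pt.a := by rw [c'.pt.unit, Category.comp_id]
      _ = (p ≫ T.η.app c'.pt.A) ≫ c'.pt.a := by rw [Category.assoc]
      _ = (T.η.app X.pt ≫ T.map p) ≫ c'.pt.a := by rw [hηp]
      _ = T.η.app X.pt ≫ T.map p ≫ c'.pt.a := by rw [Category.assoc]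


end Aux

/-- Over a surcocomplete base, the surcategory of suralgebras has surcoequalizers iff it is
surcocomplete. -/
theorem suralgebras_surcocomplete_iff_surcoequalizers
    {G : Type u} [Category.{v} G] {E : Type u₁} [Category.{v₁} E]
    (A : E ⥤ G) (T : Monad E) (hT : IsSurmonad A T)
    (hc : ∀ (J : Type s) [SmallCategory J], HasSurcolimitsOfShape A J) :
    HasSurcoequalizers (T.forget ⋙ A) ↔
      ∀ (J : Type s) [SmallCategory J], HasSurcolimitsOfShape (T.forget ⋙ A) J := by
  constructor
  · intro hcoeq J _
    exact hasSurcolimits_algebras A T hT hc hcoeq J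
  · intro h
    exact hasSurcoequalizers_of_pp (T.forget ⋙ A) (h PP.{s})

end Sur
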